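/- Assume (T6): for all f, g, γ, if α + β < γ for all α ∈ sp(f), β ∈ sp(g), then δ < γ for all δ ∈ sp(fg). Then for all f, g ∈ F: sp(fg) ⊆ sp(f) + sp(g) := {α + β : α ∈ sp(f), β ∈ sp(g)}. -/

import Mathlib

theorem stmt_18
    (F : Type*) [Field F] (Γ : Type*) [AddCommGroup Γ] [LinearOrder Γ] [IsOrderedAddMonoid Γ]
    (v : F → WithTop Γ)
    (hv0 : ∀ f : F, v f = ⊤ ↔ f = 0)
    (hvm : ∀ f g : F, v (f * g) = v f + v g)
    (hva : ∀ f g : F, min (v f) (v g) ≤ v (f + g))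
    (C : Subfield F)
    (hC1 : ∀ c ∈ C, c ≠ 0 → v c = 0)
    (hC2 : ∀ f : F, v f = 0 → ∃ c ∈ C, 0 < v (f - c))
    (tr : F → Γ → F)
    (T1 : ∀ (f : F) (α : Γ), (α : WithTop Γ) ≤ v (f - tr f α))
    (T2 : ∀ (f : F) (α : Γ), (α : WithTop Γ) ≤ v f → tr f α = 0)
    (T3 : ∀ (f : F) (α β : Γ), α < β → tr (tr f α) β = tr f α)
    (T4a : ∀ (f g : F) (α : Γ), tr (f + g) α = tr f α + tr g α)
    (T4s : ∀ c ∈ C, ∀ (f : F) (α : Γ), tr (c * f) α = c * tr f α)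
    (T5 : ∀ f : F, {γ : Γ | v (f - tr f γ) = (γ : WithTop Γ)}.IsWF)
    (T6 : ∀ (f g : F) (γ : Γ),
      (∀ α ∈ {γ' : Γ | v (f - tr f γ') = (γ' : WithTop Γ)},
        ∀ β ∈ {γ' : Γ | v (g - tr g γ') = (γ' : WithTop Γ)}, α + β < γ) →
      ∀ δ ∈ {γ' : Γ | v (f * g - tr (f * g) γ') = (γ' : WithTop Γ)}, δ < γ)
    (f g : F) :
    {γ' : Γ | v (f * g - tr (f * g) γ') = (γ' : WithTop Γ)} ⊆
      Set.image2 (· + ·) {γ' : Γ | v (f - tr f γ') = (γ' : WithTop Γ)}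
        {γ' : Γ | v (g - tr g γ') = (γ' : WithTop Γ)} := by
  intro δ hδmem
  simp only [Set.mem_setOf_eq] at hδmem
  by_contra hδim
  rw [Set.mem_image2] at hδim
  push_neg at hδim
  simp only [Set.mem_setOf_eq] at hδim
  -- basic valuation facts
  have hvtop0 : v (0 : F) = ⊤ := (hv0 0).2 rfl
  have hv1 : v (1 : F) = 0 := by
    have h1 : v (1 : F) ≠ ⊤ := fun h => one_ne_zero ((hv0 1).1 h)
    obtain ⟨a, ha⟩ := WithTop.ne_top_iff_exists.1 h1
    have : v (1 : F) = v (1 : F) + v (1 : F) := by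
      conv_lhs => rw [show (1 : F) = 1 * 1 by ring, hvm]
    rw [← ha] at this
    rw [← ha]
    have haa : a + a = a := by exact_mod_cast this.symm
    have : a = 0 := by
      have h' := add_right_cancel (a := a) (b := a) (c := 0)
      simp at h'
      exact (add_eq_left).1 haa
    simp [this]
  have hvneg : ∀ x : F, v (-x) = v x := by
    intro x
    have hm1 : v (-1 : F) = 0 := by
      have h := hvm (-1 : F) (-1 : F)
      rw [show ((-1 : F) * (-1 : F)) = 1 by ring, hv1] at h
      have h1 : v (-1 : F) ≠ ⊤ := fun ht => by
        rw [ht] at h; simp at h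
      obtain ⟨a, ha⟩ := WithTop.ne_top_iff_exists.1 h1
      rw [← ha] at h ⊢
      have haa : a + a = 0 := by exact_mod_cast h.symm
      have : a = 0 := by
        rcases lt_trichotomy a 0 with hh | hh | hh
        · exact absurd haa (ne_of_lt (by simpa using add_lt_add hh hh))
        · exact hh
        · exact absurd haa (ne_of_gt (by simpa using add_lt_add hh hh))
      simp [this]
    rw [show -x = (-1 : F) * x by ring, hvm, hm1, zero_add]
  have hvsub : ∀ x y : F, min (v x) (v y) ≤ v (x - y) := by
    intro x y
    have := hva x (-y)
    rw [hvneg y] at this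
    simpa [sub_eq_add_neg] using this
  -- ultrametric exactness
  have hEq : ∀ (p q : F) (θ : Γ), (θ : WithTop Γ) < v q → v p = (θ : WithTop Γ) →
      v (p + q) = (θ : WithTop Γ) := by
    intro p q θ hq hp
    refine le_antisymm ?_ ?_
    · by_contra h
      push_neg at h
      have hp' : (θ : WithTop Γ) < v p := by
        have hrw : (p + q) + -q = p := by ring
        calc (θ : WithTop Γ) < min (v (p + q)) (v (-q)) := by
              rw [hvneg]; exact lt_min h hq
          _ ≤ v ((p + q) + -q) := hva _ _
          _ = v p := by rw [hrw]
      rw [hp] at hp'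
      exact absurd hp' (lt_irrefl _)
    · calc (θ : WithTop Γ) = min (v p) (v q) := by rw [hp, min_eq_left hq.le]
        _ ≤ v (p + q) := hva p q
  -- truncation facts
  have htr0 : ∀ γ : Γ, tr (0 : F) γ = 0 := fun γ => T2 0 γ (by rw [hvtop0]; exact le_top)
  have hL0 : ∀ (x : F) (c : Γ), tr (tr x c) c = tr x c := by
    intro x c
    have h4 := T4a (tr x c) (x - tr x c) c
    rw [show tr x c + (x - tr x c) = x by ring] at h4
    rw [T2 _ _ (T1 x c), add_zero] at h4
    exact h4.symm
  have hL1ge : ∀ (x : F) (c γ : Γ), c ≤ γ → tr (tr x c) γ = tr x c := by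
    intro x c γ h
    rcases lt_or_eq_of_le h with h | h
    · exact T3 x c γ h
    · rw [← h]; exact hL0 x c
  have hL1lt : ∀ (x : F) (c γ : Γ), γ < c → tr (tr x c) γ = tr x γ := by
    intro x c γ h
    have h4 := T4a (tr x c) (x - tr x c) γ
    rw [show tr x c + (x - tr x c) = x by ring] at h4
    have h2 : tr (x - tr x c) γ = 0 :=
      T2 _ _ (le_trans (le_of_lt (WithTop.coe_lt_coe.2 h)) (T1 x c))
    rw [h2, add_zero] at h4
    exact h4.symm
  have htrsub : ∀ (x y : F) (γ : Γ), tr (x - y) γ = tr x γ - tr y γ := by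
    intro x y γ
    have h4 := T4a (x - y) y γ
    rw [show (x - y) + y = x by ring] at h4
    rw [h4]; ring
  have hnotlow : ∀ (x : F) (θ : Γ), (θ : WithTop Γ) < v x → v (x - tr x θ) ≠ (θ : WithTop Γ) := by
    intro x θ h
    rw [T2 x θ h.le, sub_zero]
    exact fun h' => absurd (h'.symm ▸ h) (lt_irrefl _)
  have hgt : ∀ (x : F) (θ : Γ), v (x - tr x θ) ≠ (θ : WithTop Γ) →
      (θ : WithTop Γ) < v (x - tr x θ) := fun x θ h => lt_of_le_of_ne (T1 x θ) (Ne.symm h)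
  have hadd_not : ∀ (x y : F) (θ : Γ), v (x - tr x θ) ≠ (θ : WithTop Γ) →
      v (y - tr y θ) ≠ (θ : WithTop Γ) → v ((x + y) - tr (x + y) θ) ≠ (θ : WithTop Γ) := by
    intro x y θ hx hy
    rw [T4a x y θ]
    have hrw : x + y - (tr x θ + tr y θ) = (x - tr x θ) + (y - tr y θ) := by ring
    rw [hrw]
    have : (θ : WithTop Γ) < v ((x - tr x θ) + (y - tr y θ)) :=
      lt_of_lt_of_le (lt_min (hgt x θ hx) (hgt y θ hy)) (hva _ _)
    exact fun h' => absurd (h' ▸ this) (lt_irrefl _)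
  have hvfin : ∀ x : F, x ≠ 0 → ∃ a : Γ, v x = (a : WithTop Γ) := by
    intro x hx
    obtain ⟨a, ha⟩ := WithTop.ne_top_iff_exists.1 (fun h => hx ((hv0 x).1 h))
    exact ⟨a, ha.symm⟩
  have hvmem : ∀ (x : F) (a : Γ), v x = (a : WithTop Γ) → v (x - tr x a) = (a : WithTop Γ) := by
    intro x a ha
    rw [T2 x a ha.ge, sub_zero]; exact ha
  -- spectrum of a truncation: sp (tr x c) ↔ (θ < c ∧ θ ∈ sp x)
  have hsptr : ∀ (x : F) (c θ : Γ), v (tr x c - tr (tr x c) θ) = (θ : WithTop Γ) →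
      θ < c ∧ v (x - tr x θ) = (θ : WithTop Γ) := by
    intro x c θ h
    by_cases hc : θ < c
    · refine ⟨hc, ?_⟩
      rw [hL1lt x c θ hc] at h
      rw [show tr x c - tr x θ = ((x - tr x θ) + -(x - tr x c)) by ring] at h
      have hvc : (θ : WithTop Γ) < v (x - tr x c) :=
        lt_of_lt_of_le (WithTop.coe_lt_coe.2 hc) (T1 x c)
      have := hEq ((x - tr x θ) + -(x - tr x c)) (x - tr x c) θ hvc h
      rwa [show ((x - tr x θ) + -(x - tr x c)) + (x - tr x c) = x - tr x θ by ring] at this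
    · rw [hL1ge x c θ (not_lt.1 hc), sub_self, hvtop0] at h
      exact absurd h.symm (WithTop.coe_ne_top)
  have hsptr' : ∀ (x : F) (c θ : Γ), θ < c → v (x - tr x θ) = (θ : WithTop Γ) →
      v (tr x c - tr (tr x c) θ) = (θ : WithTop Γ) := by
    intro x c θ hc h
    rw [hL1lt x c θ hc]
    rw [show tr x c - tr x θ = ((x - tr x θ) + -(x - tr x c)) by ring]
    have hvc : (θ : WithTop Γ) < v (-(x - tr x c)) := by
      rw [hvneg]; exact lt_of_lt_of_le (WithTop.coe_lt_coe.2 hc) (T1 x c)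
    exact hEq (x - tr x θ) (-(x - tr x c)) θ hvc h
  -- spectrum of a tail: sp (x - tr x c) ↔ (c ≤ θ ∧ θ ∈ sp x)
  have hspres : ∀ (x : F) (c θ : Γ), v ((x - tr x c) - tr (x - tr x c) θ) = (θ : WithTop Γ) ↔
      (c ≤ θ ∧ v (x - tr x θ) = (θ : WithTop Γ)) := by
    intro x c θ
    by_cases hc : θ < c
    · rw [htrsub x (tr x c) θ, hL1lt x c θ hc, sub_self, sub_zero]
      constructor
      · intro h
        exact absurd h (ne_of_gt (lt_of_lt_of_le (WithTop.coe_lt_coe.2 hc) (T1 x c)))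
      · intro ⟨h1, _⟩; exact absurd h1 (not_le.2 hc)
    · have hc' : c ≤ θ := not_lt.1 hc
      rw [htrsub x (tr x c) θ, hL1ge x c θ hc']
      rw [show (x - tr x c) - (tr x θ - tr x c) = x - tr x θ by ring]
      exact ⟨fun h => ⟨hc', h⟩, fun h => h.2⟩
  -- corollary of T6
  have hT6' : ∀ x y : F,
      (∀ α : Γ, v (x - tr x α) = (α : WithTop Γ) →
        ∀ β : Γ, v (y - tr y β) = (β : WithTop Γ) → α + β < δ) →
      v (x * y - tr (x * y) δ) ≠ (δ : WithTop Γ) := by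
    intro x y h hin
    exact absurd (T6 x y δ (fun α hα β hβ => h α hα β hβ) δ hin) (lt_irrefl δ)
  -- The key step lemma
  have step : ∀ x : F, x ≠ 0 →
      (∀ θ : Γ, v (x - tr x θ) = (θ : WithTop Γ) → v (f - tr f θ) = (θ : WithTop Γ)) →
      v (x * g - tr (x * g) δ) = (δ : WithTop Γ) →
      ∃ (y : F) (w : Γ), y ≠ 0 ∧
        (∀ θ : Γ, v (y - tr y θ) = (θ : WithTop Γ) → v (f - tr f θ) = (θ : WithTop Γ)) ∧
        v (y * g - tr (y * g) δ) = (δ : WithTop Γ) ∧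
        v (g - tr g w) = (w : WithTop Γ) ∧
        (δ : WithTop Γ) < v y + (w : WithTop Γ) ∧
        (∀ u : Γ, v (g - tr g u) = (u : WithTop Γ) →
          (δ : WithTop Γ) < v x + (u : WithTop Γ) → w < u) := by
    intro x hxne cond hx
    obtain ⟨a, hva'⟩ := hvfin x hxne
    have haA : v (x - tr x a) = (a : WithTop Γ) := hvmem x a hva'
    -- key: products with g vanish at δ when all low pairings stay below δ
    have key : ∀ y : F, (a : WithTop Γ) ≤ v y →
        (∀ α : Γ, v (y - tr y α) = (α : WithTop Γ) →
          ∀ β : Γ, v (g - tr g β) = (β : WithTop Γ) → a + β ≤ δ → α + β < δ) →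
        v (y * g - tr (y * g) δ) ≠ (δ : WithTop Γ) := by
      intro y hay Hy
      set P : Set Γ := {u : Γ | v (g - tr g u) = (u : WithTop Γ) ∧ δ < a + u} with hPdef
      have hPwf : P.IsWF := (T5 g).mono (fun u hu => hu.1)
      by_cases hP : P.Nonempty
      · set w := hPwf.min hP with hwdef
        have hwmem : w ∈ P := hPwf.min_mem hP
        have h1 : v (y * tr g w - tr (y * tr g w) δ) ≠ (δ : WithTop Γ) := by
          apply hT6' y (tr g w)
          intro α hα β hβ
          obtain ⟨hβw, hβB⟩ := hsptr g w β hβ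
          have hβnP : a + β ≤ δ := by
            by_contra hcon
            push_neg at hcon
            exact absurd hβw (not_lt.2 (hPwf.min_le hP ⟨hβB, hcon⟩))
          exact Hy α hα β hβB hβnP
        have h2 : v (y * (g - tr g w) - tr (y * (g - tr g w)) δ) ≠ (δ : WithTop Γ) := by
          apply hnotlow
          calc (δ : WithTop Γ) < ((a + w : Γ) : WithTop Γ) := WithTop.coe_lt_coe.2 hwmem.2
            _ = (a : WithTop Γ) + (w : WithTop Γ) := WithTop.coe_add a w
            _ ≤ v y + v (g - tr g w) := add_le_add hay (T1 g w)
            _ = v (y * (g - tr g w)) := (hvm _ _).symm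
        have := hadd_not _ _ δ h1 h2
        rwa [show y * tr g w + y * (g - tr g w) = y * g by ring] at this
      · apply hT6' y g
        intro α hα β hβ
        refine Hy α hα β hβ (le_of_not_gt fun hcon => hP ⟨β, hβ, hcon⟩)
    -- split according to whether some α ∈ sp x pairs with a "low" β
    set A2 : Set Γ := {α : Γ | v (x - tr x α) = (α : WithTop Γ) ∧
      ∃ β : Γ, v (g - tr g β) = (β : WithTop Γ) ∧ a + β ≤ δ ∧ δ < α + β} with hA2def
    have hA2wf : A2.IsWF := (T5 x).mono (fun α hα => hα.1)
    by_cases hA2 : A2.Nonempty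
    · -- Case II
      set α' := hA2wf.min hA2 with hα'def
      obtain ⟨hα'x, β', hβ'B, hβ'le, hβ'gt⟩ := hA2wf.min_mem hA2
      have haα' : a ≤ α' := by
        by_contra hcon
        push_neg at hcon
        exact hnotlow x α' (by rw [hva']; exact_mod_cast hcon) hα'x
      set y := x - tr x α' with hydef
      have hyv : (α' : WithTop Γ) ≤ v y := T1 x α'
      have hyne : y ≠ 0 := by
        intro h0
        have hm : v (y - tr y α') = (α' : WithTop Γ) := (hspres x α' α').2 ⟨le_refl α', hα'x⟩
        rw [h0, htr0, sub_zero, hvtop0] at hm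
        exact WithTop.coe_ne_top hm.symm
      have hcond2 : ∀ θ : Γ, v (y - tr y θ) = (θ : WithTop Γ) →
          v (f - tr f θ) = (θ : WithTop Γ) := fun θ h => cond θ ((hspres x α' θ).1 h).2
      -- δ ∉ sp ((tr x α') * g)
      have h1 : v (tr x α' * g - tr (tr x α' * g) δ) ≠ (δ : WithTop Γ) := by
        apply key (tr x α')
        · have hmin : min (v x) (v y) ≤ v (x - y) := hvsub x y
          rw [show x - y = tr x α' by rw [hydef]; ring] at hmin
          refine le_trans (le_min (le_of_eq hva'.symm) ?_) hmin
          exact le_trans (WithTop.coe_le_coe.2 haα') hyv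
        · intro α hα β hβ hβle
          obtain ⟨hαα', hαx⟩ := hsptr x α' α hα
          have hαnA2 : α ∉ A2 := fun h => (hA2wf.min_le hA2 h).not_gt hαα'
          have hne : α + β ≠ δ := hδim α (cond α hαx) β hβ
          have hnotgt : ¬ δ < α + β := fun hcon => hαnA2 ⟨hαx, β, hβ, hβle, hcon⟩
          exact lt_of_le_of_ne (not_lt.1 hnotgt) hne
      have hyin : v (y * g - tr (y * g) δ) = (δ : WithTop Γ) := by
        by_contra hcon
        have := hadd_not _ _ δ h1 hcon
        rw [show tr x α' * g + y * g = x * g by rw [hydef]; ring] at this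
        exact this hx
      refine ⟨y, β', hyne, hcond2, hyin, hβ'B, ?_, ?_⟩
      · calc (δ : WithTop Γ) < ((α' + β' : Γ) : WithTop Γ) := WithTop.coe_lt_coe.2 hβ'gt
          _ = (α' : WithTop Γ) + (β' : WithTop Γ) := WithTop.coe_add α' β'
          _ ≤ v y + (β' : WithTop Γ) := add_le_add_left hyv _
      · intro u huB hu
        rw [hva'] at hu
        have hu' : δ < a + u := by exact_mod_cast hu
        have : a + β' < a + u := lt_of_le_of_lt hβ'le hu'
        exact lt_of_add_lt_add_left this
    · -- Case I : contradiction
      exfalso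
      apply key x (le_of_eq hva'.symm) ?_ hx
      intro α hα β hβ hβle
      have hαnA2 : α ∉ A2 := fun h => hA2 ⟨α, h⟩
      have hne : α + β ≠ δ := hδim α (cond α hα) β hβ
      have hnotgt : ¬ δ < α + β := fun hcon => hαnA2 ⟨hα, β, hβ, hβle, hcon⟩
      exact lt_of_le_of_ne (not_lt.1 hnotgt) hne
  -- wrap up : minimal criminal along sp g
  have hfne : f ≠ 0 := by
    intro h
    rw [h, zero_mul, htr0, sub_zero, hvtop0] at hδmem
    exact WithTop.coe_ne_top hδmem.symm
  obtain ⟨y₀, w₀, hy₀ne, hc₀, hy₀in, hw₀B, hw₀gt, _⟩ := step f hfne (fun θ h => h) hδmem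
  set W : Set Γ := {w : Γ | v (g - tr g w) = (w : WithTop Γ) ∧ ∃ y : F, y ≠ 0 ∧
    (∀ θ : Γ, v (y - tr y θ) = (θ : WithTop Γ) → v (f - tr f θ) = (θ : WithTop Γ)) ∧
    v (y * g - tr (y * g) δ) = (δ : WithTop Γ) ∧
    (δ : WithTop Γ) < v y + (w : WithTop Γ)} with hWdef
  have hWwf : W.IsWF := (T5 g).mono (fun w hw => hw.1)
  have hWne : W.Nonempty := ⟨w₀, hw₀B, y₀, hy₀ne, hc₀, hy₀in, hw₀gt⟩
  obtain ⟨hwmB, ym, hymne, hymc, hymin, hymgt⟩ := hWwf.min_mem hWne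
  obtain ⟨y₂, w₂, hy₂ne, hy₂c, hy₂in, hw₂B, hw₂gt, hw₂lt⟩ := step ym hymne hymc hymin
  have hlt : w₂ < hWwf.min hWne := hw₂lt _ hwmB hymgt
  have hmem : w₂ ∈ W := ⟨hw₂B, y₂, hy₂ne, hy₂c, hy₂in, hw₂gt⟩
  exact absurd (hWwf.min_le hWne hmem) (not_le.2 hlt)
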